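/- No sampling scheme dominates the Jaccard index: if X and Y are finite sets with X ≠ Y and G is any coupling of samples uniformly distributed on X and on Y respectively, then it is impossible that simultaneously Pr[G(X)=G(Y)] > J(X,Y), Pr[G(X∪Y∖(X∩Y))=G(X)] ≥ J(X∪Y∖(X∩Y), X), and Pr[G(X∪Y∖(X∩Y))=G(Y)] ≥ J(X∪Y∖(X∩Y), Y), with at least one strict. More precisely: for the symmetric difference Z of X and Y, the three collision events (uniform samples agreeing pairwise) are disjoint, and the Jaccard indices J(X,Y), J(Z,X)=|X∖Y|/|X∪Y|, J(Z,Y)=|Y∖X|/|X∪Y| sum to exactly 1, so no coupling can strictly exceed all three. -/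

import Mathlib

open MeasureTheory Finset

/-- The Jaccard index of two finite sets. -/
noncomputable def jaccard {ι : Type*} [DecidableEq ι] (A B : Finset ι) : ℝ :=
  ((A ∩ B).card : ℝ) / ((A ∪ B).card : ℝ)

lemma unif_mem_compl_null {ι : Type*} [DecidableEq ι] {Ω : Type*} [MeasurableSpace Ω]
    (μ : Measure Ω) [IsProbabilityMeasure μ] (g : Ω → ι) (S : Finset ι) (hS : S.Nonempty)
    (hm : ∀ s : ι, MeasurableSet {ω | g ω = s})
    (hu : ∀ s : ι, (μ {ω | g ω = s}).toReal = if s ∈ S then (S.card : ℝ)⁻¹ else 0) :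
    μ {ω | g ω ∈ S}ᶜ = 0 := by
  have hset : {ω | g ω ∈ S} = ⋃ s ∈ S, {ω | g ω = s} := by ext ω; simp
  have hmA : MeasurableSet {ω | g ω ∈ S} := by
    rw [hset]; exact S.measurableSet_biUnion (fun s _ => hm s)
  have hdisj : (S : Set ι).PairwiseDisjoint (fun s => {ω | g ω = s}) := by
    intro s _ t _ hst
    simp only [Set.disjoint_left, Set.mem_setOf_eq]
    intro ω hs ht
    exact hst (hs.symm.trans ht)
  have hμ : μ {ω | g ω ∈ S} = ∑ s ∈ S, μ {ω | g ω = s} := by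
    rw [hset, measure_biUnion_finset hdisj (fun s _ => hm s)]
  have hne : ∀ s ∈ S, μ {ω | g ω = s} ≠ ⊤ := fun s _ => measure_ne_top μ _
  have hcard : (S.card : ℝ) ≠ 0 := by
    exact_mod_cast Finset.card_ne_zero_of_mem hS.choose_spec
  have h1 : (μ {ω | g ω ∈ S}).toReal = 1 := by
    rw [hμ, ENNReal.toReal_sum hne]
    rw [Finset.sum_congr rfl (fun s hs => by rw [hu s, if_pos hs])]
    rw [Finset.sum_const, nsmul_eq_mul, mul_inv_cancel₀ hcard]
  have hone : μ {ω | g ω ∈ S} = 1 := by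
    rw [← ENNReal.ofReal_toReal (measure_ne_top μ _), h1]; simp
  rw [prob_compl_eq_zero_iff hmA]
  exact hone

theorem jaccard_pareto_optimal {ι : Type*} [DecidableEq ι]
    (X Y : Finset ι) (hX : X.Nonempty) (hY : Y.Nonempty) (hXY : X ≠ Y)
    (Z : Finset ι) (hZ : Z = (X ∪ Y) \ (X ∩ Y))
    {Ω : Type*} [MeasurableSpace Ω] (μ : Measure Ω) [IsProbabilityMeasure μ]
    (gX gY gZ : Ω → ι)
    (hmX : ∀ s : ι, MeasurableSet {ω | gX ω = s})
    (hmY : ∀ s : ι, MeasurableSet {ω | gY ω = s})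
    (hmZ : ∀ s : ι, MeasurableSet {ω | gZ ω = s})
    (huX : ∀ s : ι, (μ {ω | gX ω = s}).toReal = if s ∈ X then (X.card : ℝ)⁻¹ else 0)
    (huY : ∀ s : ι, (μ {ω | gY ω = s}).toReal = if s ∈ Y then (Y.card : ℝ)⁻¹ else 0)
    (huZ : ∀ s : ι, (μ {ω | gZ ω = s}).toReal = if s ∈ Z then (Z.card : ℝ)⁻¹ else 0) :
    jaccard X Y + jaccard Z X + jaccard Z Y = 1 ∧
    ¬ (jaccard X Y < (μ {ω | gX ω = gY ω}).toReal ∧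
        jaccard Z X ≤ (μ {ω | gZ ω = gX ω}).toReal ∧
        jaccard Z Y ≤ (μ {ω | gZ ω = gY ω}).toReal) := by
  -- set identities
  have hZX : Z ∩ X = X \ Y := by rw [hZ]; ext a; simp; tauto
  have hZuX : Z ∪ X = X ∪ Y := by rw [hZ]; ext a; simp; tauto
  have hZY : Z ∩ Y = Y \ X := by rw [hZ]; ext a; simp; tauto
  have hZuY : Z ∪ Y = X ∪ Y := by rw [hZ]; ext a; simp; tauto
  have hZne : Z.Nonempty := by
    rw [hZ, Finset.nonempty_iff_ne_empty]
    intro h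
    rw [Finset.sdiff_eq_empty_iff_subset] at h
    exact hXY (Finset.Subset.antisymm
      (fun a ha => (Finset.mem_inter.1 (h (by simp [ha]))).2)
      (fun a ha => (Finset.mem_inter.1 (h (by simp [ha]))).1))
  have hcardU : ((X ∪ Y).card : ℝ) ≠ 0 := by
    have : (X ∪ Y).Nonempty := hX.mono Finset.subset_union_left
    exact_mod_cast Finset.card_ne_zero_of_mem this.choose_spec
  have hcards : (X ∩ Y).card + (X \ Y).card + (Y \ X).card = (X ∪ Y).card := by
    have h1 : (X \ Y).card + (X ∩ Y).card = X.card := Finset.card_sdiff_add_card_inter X Y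
    have h2 : X.card + (Y \ X).card = (X ∪ Y).card := by
      rw [← Finset.card_union_of_disjoint (Finset.disjoint_sdiff),
        Finset.union_sdiff_self_eq_union]
    omega
  have hsum : jaccard X Y + jaccard Z X + jaccard Z Y = 1 := by
    unfold jaccard
    rw [hZX, hZuX, hZY, hZuY, ← add_div, ← add_div, div_eq_one_iff_eq hcardU]
    exact_mod_cast hcards
  refine ⟨hsum, ?_⟩
  rintro ⟨h1, h2, h3⟩
  -- null sets
  have hNX : μ {ω | gX ω ∈ X}ᶜ = 0 := unif_mem_compl_null μ gX X hX hmX huX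
  have hNY : μ {ω | gY ω ∈ Y}ᶜ = 0 := unif_mem_compl_null μ gY Y hY hmY huY
  have hNZ : μ {ω | gZ ω ∈ Z}ᶜ = 0 := unif_mem_compl_null μ gZ Z hZne hmZ huZ
  -- disjoint covering events
  set F1 : Set Ω := ⋃ s ∈ X ∩ Y, ({ω | gX ω = s} ∩ {ω | gY ω = s}) with hF1
  set F2 : Set Ω := ⋃ s ∈ X \ Y, ({ω | gZ ω = s} ∩ {ω | gX ω = s}) with hF2
  set F3 : Set Ω := ⋃ s ∈ Y \ X, ({ω | gZ ω = s} ∩ {ω | gY ω = s}) with hF3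
  have hmF1 : MeasurableSet F1 :=
    (X ∩ Y).measurableSet_biUnion (fun s _ => (hmX s).inter (hmY s))
  have hmF2 : MeasurableSet F2 :=
    (X \ Y).measurableSet_biUnion (fun s _ => (hmZ s).inter (hmX s))
  have hmF3 : MeasurableSet F3 :=
    (Y \ X).measurableSet_biUnion (fun s _ => (hmZ s).inter (hmY s))
  -- inclusions up to null sets
  have hE1 : {ω | gX ω = gY ω} ⊆ F1 ∪ ({ω | gX ω ∈ X}ᶜ ∪ {ω | gY ω ∈ Y}ᶜ) := by
    intro ω hω
    by_cases hx : gX ω ∈ X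
    · by_cases hy : gY ω ∈ Y
      · left
        simp only [hF1, Set.mem_iUnion]
        exact ⟨gX ω, Finset.mem_inter.2 ⟨hx, hω ▸ hy⟩, rfl, hω.symm⟩
      · exact Or.inr (Or.inr hy)
    · exact Or.inr (Or.inl hx)
  have hE2 : {ω | gZ ω = gX ω} ⊆ F2 ∪ ({ω | gZ ω ∈ Z}ᶜ ∪ {ω | gX ω ∈ X}ᶜ) := by
    intro ω hω
    by_cases hz : gZ ω ∈ Z
    · by_cases hx : gX ω ∈ X
      · left
        simp only [hF2, Set.mem_iUnion]
        refine ⟨gZ ω, ?_, rfl, hω.symm⟩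
        rw [← hZX]; exact Finset.mem_inter.2 ⟨hz, hω ▸ hx⟩
      · exact Or.inr (Or.inr hx)
    · exact Or.inr (Or.inl hz)
  have hE3 : {ω | gZ ω = gY ω} ⊆ F3 ∪ ({ω | gZ ω ∈ Z}ᶜ ∪ {ω | gY ω ∈ Y}ᶜ) := by
    intro ω hω
    by_cases hz : gZ ω ∈ Z
    · by_cases hy : gY ω ∈ Y
      · left
        simp only [hF3, Set.mem_iUnion]
        refine ⟨gZ ω, ?_, rfl, hω.symm⟩
        rw [← hZY]; exact Finset.mem_inter.2 ⟨hz, hω ▸ hy⟩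
      · exact Or.inr (Or.inr hy)
    · exact Or.inr (Or.inl hz)
  have hle1 : μ {ω | gX ω = gY ω} ≤ μ F1 := by
    have hnull : μ ({ω | gX ω ∈ X}ᶜ ∪ {ω | gY ω ∈ Y}ᶜ) = 0 := measure_union_null hNX hNY
    calc μ {ω | gX ω = gY ω} ≤ μ (F1 ∪ ({ω | gX ω ∈ X}ᶜ ∪ {ω | gY ω ∈ Y}ᶜ)) :=
          measure_mono hE1
      _ ≤ μ F1 + μ ({ω | gX ω ∈ X}ᶜ ∪ {ω | gY ω ∈ Y}ᶜ) := measure_union_le _ _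
      _ = μ F1 := by rw [hnull, add_zero]
  have hle2 : μ {ω | gZ ω = gX ω} ≤ μ F2 := by
    have hnull : μ ({ω | gZ ω ∈ Z}ᶜ ∪ {ω | gX ω ∈ X}ᶜ) = 0 := measure_union_null hNZ hNX
    calc μ {ω | gZ ω = gX ω} ≤ μ (F2 ∪ ({ω | gZ ω ∈ Z}ᶜ ∪ {ω | gX ω ∈ X}ᶜ)) :=
          measure_mono hE2
      _ ≤ μ F2 + μ ({ω | gZ ω ∈ Z}ᶜ ∪ {ω | gX ω ∈ X}ᶜ) := measure_union_le _ _
      _ = μ F2 := by rw [hnull, add_zero]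
  have hle3 : μ {ω | gZ ω = gY ω} ≤ μ F3 := by
    have hnull : μ ({ω | gZ ω ∈ Z}ᶜ ∪ {ω | gY ω ∈ Y}ᶜ) = 0 := measure_union_null hNZ hNY
    calc μ {ω | gZ ω = gY ω} ≤ μ (F3 ∪ ({ω | gZ ω ∈ Z}ᶜ ∪ {ω | gY ω ∈ Y}ᶜ)) :=
          measure_mono hE3
      _ ≤ μ F3 + μ ({ω | gZ ω ∈ Z}ᶜ ∪ {ω | gY ω ∈ Y}ᶜ) := measure_union_le _ _
      _ = μ F3 := by rw [hnull, add_zero]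
  -- pairwise disjointness
  have hd12 : Disjoint F1 F2 := by
    rw [Set.disjoint_left]
    intro ω hω1 hω2
    simp only [hF1, hF2, Set.mem_iUnion] at hω1 hω2
    obtain ⟨s, hs, hxs, -⟩ := hω1
    obtain ⟨t, ht, -, hxt⟩ := hω2
    rw [Set.mem_setOf_eq] at hxs hxt
    rw [hxs] at hxt
    subst hxt
    exact (Finset.mem_sdiff.1 ht).2 (Finset.mem_inter.1 hs).2
  have hd13 : Disjoint F1 F3 := by
    rw [Set.disjoint_left]
    intro ω hω1 hω3
    simp only [hF1, hF3, Set.mem_iUnion] at hω1 hω3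
    obtain ⟨s, hs, -, hys⟩ := hω1
    obtain ⟨t, ht, -, hyt⟩ := hω3
    rw [Set.mem_setOf_eq] at hys hyt
    rw [hys] at hyt
    subst hyt
    exact (Finset.mem_sdiff.1 ht).2 (Finset.mem_inter.1 hs).1
  have hd23 : Disjoint F2 F3 := by
    rw [Set.disjoint_left]
    intro ω hω2 hω3
    simp only [hF2, hF3, Set.mem_iUnion] at hω2 hω3
    obtain ⟨s, hs, hzs, -⟩ := hω2
    obtain ⟨t, ht, hzt, -⟩ := hω3
    rw [Set.mem_setOf_eq] at hzs hzt
    rw [hzs] at hzt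
    subst hzt
    exact (Finset.mem_sdiff.1 ht).2 (Finset.mem_sdiff.1 hs).1
  have hsumF : μ F1 + μ F2 + μ F3 ≤ 1 := by
    have e12 : μ (F1 ∪ F2) = μ F1 + μ F2 := measure_union hd12 hmF2
    have e123 : μ (F1 ∪ F2 ∪ F3) = μ (F1 ∪ F2) + μ F3 :=
      measure_union (Set.disjoint_union_left.2 ⟨hd13, hd23⟩) hmF3
    calc μ F1 + μ F2 + μ F3 = μ (F1 ∪ F2 ∪ F3) := by rw [e123, e12]
      _ ≤ 1 := prob_le_one
  -- pass to reals
  have key : (μ {ω | gX ω = gY ω}).toReal + (μ {ω | gZ ω = gX ω}).toReal +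
      (μ {ω | gZ ω = gY ω}).toReal ≤ 1 := by
    have t1 : (μ {ω | gX ω = gY ω}).toReal ≤ (μ F1).toReal :=
      ENNReal.toReal_mono (measure_ne_top μ _) hle1
    have t2 : (μ {ω | gZ ω = gX ω}).toReal ≤ (μ F2).toReal :=
      ENNReal.toReal_mono (measure_ne_top μ _) hle2
    have t3 : (μ {ω | gZ ω = gY ω}).toReal ≤ (μ F3).toReal :=
      ENNReal.toReal_mono (measure_ne_top μ _) hle3
    have tF : (μ F1).toReal + (μ F2).toReal + (μ F3).toReal ≤ 1 := by
      have := ENNReal.toReal_mono (by simp) hsumF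
      rwa [ENNReal.toReal_add (ENNReal.add_ne_top.2 ⟨measure_ne_top μ _, measure_ne_top μ _⟩) (measure_ne_top μ _),
        ENNReal.toReal_add (measure_ne_top μ _) (measure_ne_top μ _),
        ENNReal.toReal_one] at this
    linarith
  linarith
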